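/- Let f : ℝ → ℝ be three times continuously differentiable on the interval [x, x + h₁ + h₂], where h₁ > 0 and h₂ > 0, and suppose |f'''(ξ)| ≤ M for all ξ in [x, x + h₁ + h₂]. Then the one-sided three-point difference formula on the nonuniform stencil satisfies | ( h₂(2h₁ + h₂) f(x) − (h₁ + h₂)² f(x + h₁) + h₁² f(x + h₁ + h₂) ) / ( h₁ h₂ (h₁ + h₂) ) + f'(x) | ≤ M · ( h₁²(h₁ + h₂) + h₁(h₁ + h₂)² ) / (6 h₂). In particular, for mesh steps with bounded ratio h₁/h₂ the formula approximates −f'(x) with second-order accuracy O((h₁ + h₂)²). -/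

import Mathlib

open Set

private lemma iterDW_congr_set {f : ℝ → ℝ} {s t : Set ℝ} {x : ℝ} (n : ℕ)
    (h : s =ᶠ[nhds x] t) :
    iteratedDerivWithin n f s x = iteratedDerivWithin n f t x := by
  simp only [iteratedDerivWithin, iteratedFDerivWithin_congr_set h]

private lemma icc_eventuallyEq {x b a z : ℝ} (hz : x < b) (hzb : z < b) (hba : b ≤ a)
    (hxz : x < z ∨ z = x) :
    Set.Icc x b =ᶠ[nhds z] Set.Icc x a := by
  have : Set.Iio b ∈ nhds z := Iio_mem_nhds hzb
  filter_upwards [this] with y hy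
  show (y ∈ Set.Icc x b) = (y ∈ Set.Icc x a)
  simp only [Set.mem_Icc]
  exact propext (and_congr_right fun _ => iff_of_true hy.le (hy.le.trans hba))

private lemma taylor_aux (f : ℝ → ℝ) (x a M h : ℝ) (hh : 0 < h) (hha : x + h ≤ a)
    (hf : ContDiffOn ℝ 3 f (Set.Icc x a))
    (hM : ∀ ξ ∈ Set.Icc x a, |iteratedDerivWithin 3 f (Set.Icc x a) ξ| ≤ M) :
    |f (x + h) - f x - derivWithin f (Set.Icc x a) x * h
      - iteratedDerivWithin 2 f (Set.Icc x a) x * h ^ 2 / 2| ≤ M * h ^ 3 / 6 := by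
  set b := x + h with hb
  have hxb : x < b := by simp [hb]; linarith
  have hT : Set.Icc x b ⊆ Set.Icc x a := Icc_subset_Icc_right hha
  have hf2 : ContDiffOn ℝ 2 f (Set.Icc x b) :=
    (hf.mono hT).of_le (by norm_num)
  have hf' : DifferentiableOn ℝ (iteratedDerivWithin 2 f (Set.Icc x b)) (Set.Ioo x b) :=
    ((hf.mono hT).differentiableOn_iteratedDerivWithin (by norm_num)
      (uniqueDiffOn_Icc hxb)).mono Set.Ioo_subset_Icc_self
  obtain ⟨x', hx', heq⟩ := taylor_mean_remainder_lagrange (n := 2) hxb.ne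
    (by rwa [Set.uIcc_of_le hxb.le]) (by rwa [Set.uIcc_of_le hxb.le, Set.uIoo_of_le hxb.le])
  rw [Set.uIoo_of_le hxb.le] at hx'
  rw [Set.uIcc_of_le hxb.le] at heq
  have hsetx : Set.Icc x b =ᶠ[nhds x] Set.Icc x a :=
    icc_eventuallyEq hxb hxb hha (Or.inr rfl)
  have hsetx' : Set.Icc x b =ᶠ[nhds x'] Set.Icc x a :=
    icc_eventuallyEq hxb hx'.2 hha (Or.inl hx'.1)
  have hx'mem : x' ∈ Set.Icc x a := hT (Set.Ioo_subset_Icc_self hx')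
  have hud : UniqueDiffWithinAt ℝ (Set.Icc x b) x := (uniqueDiffOn_Icc hxb) x (Set.left_mem_Icc.2 hxb.le)
  have hTay : taylorWithinEval f 2 (Set.Icc x b) x b
      = f x + derivWithin f (Set.Icc x a) x * h
        + iteratedDerivWithin 2 f (Set.Icc x a) x * h ^ 2 / 2 := by
    rw [taylor_within_apply]
    rw [Finset.sum_range_succ, Finset.sum_range_succ, Finset.sum_range_one]
    rw [iterDW_congr_set 1 hsetx, iterDW_congr_set 2 hsetx]
    rw [iterDW_congr_set 1 hsetx.symm]
    rw [iteratedDerivWithin_one, derivWithin_congr_set hsetx]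
    simp only [iteratedDerivWithin_zero]
    have : b - x = h := by simp [hb]
    rw [this]
    norm_num [Nat.factorial]
    ring
  rw [hTay] at heq
  rw [iterDW_congr_set 3 hsetx'] at heq
  have hb_x : b - x = h := by simp [hb]
  rw [hb_x] at heq
  have : f (x + h) - f x - derivWithin f (Set.Icc x a) x * h
      - iteratedDerivWithin 2 f (Set.Icc x a) x * h ^ 2 / 2
      = iteratedDerivWithin 3 f (Set.Icc x a) x' * h ^ 3 / 6 := by
    have := heq
    rw [← hb]
    norm_num [Nat.factorial] at this ⊢
    linarith
  rw [this]
  rw [abs_div, abs_mul]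
  have h3 : |h ^ 3| = h ^ 3 := abs_of_nonneg (by positivity)
  rw [h3]
  have : |(6:ℝ)| = 6 := by norm_num
  rw [this]
  apply div_le_div_of_nonneg_right ?_ (by norm_num)
  exact mul_le_mul_of_nonneg_right (hM x' hx'mem) (by positivity)

theorem forward_three_point_stencil_error
    (f : ℝ → ℝ) (x h₁ h₂ M : ℝ) (hh₁ : 0 < h₁) (hh₂ : 0 < h₂)
    (hf : ContDiffOn ℝ 3 f (Set.Icc x (x + h₁ + h₂)))
    (hM : ∀ ξ ∈ Set.Icc x (x + h₁ + h₂),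
      |iteratedDerivWithin 3 f (Set.Icc x (x + h₁ + h₂)) ξ| ≤ M) :
    |(h₂ * (2 * h₁ + h₂) * f x - (h₁ + h₂) ^ 2 * f (x + h₁)
        + h₁ ^ 2 * f (x + h₁ + h₂)) / (h₁ * h₂ * (h₁ + h₂))
      + derivWithin f (Set.Icc x (x + h₁ + h₂)) x|
      ≤ M * (h₁ ^ 2 * (h₁ + h₂) + h₁ * (h₁ + h₂) ^ 2) / (6 * h₂) := by
  have hadd : x + (h₁ + h₂) = x + h₁ + h₂ := by ring
  have E1 := taylor_aux f x (x + h₁ + h₂) M h₁ hh₁ (by linarith) hf hM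
  have E2 := taylor_aux f x (x + h₁ + h₂) M (h₁ + h₂) (by linarith) (by linarith) hf hM
  rw [hadd] at E2
  set S := Set.Icc x (x + h₁ + h₂) with hS
  set B := derivWithin f S x with hB
  set C := iteratedDerivWithin 2 f S x with hC
  set H := h₁ + h₂ with hH
  set e1 := f (x + h₁) - f x - B * h₁ - C * h₁ ^ 2 / 2 with he1
  set e2 := f (x + h₁ + h₂) - f x - B * H - C * H ^ 2 / 2 with he2
  have hHpos : 0 < H := by positivity
  have hden : 0 < h₁ * h₂ * H := by positivity
  have key : (h₂ * (2 * h₁ + h₂) * f x - H ^ 2 * f (x + h₁)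
        + h₁ ^ 2 * f (x + h₁ + h₂)) / (h₁ * h₂ * H) + B
      = (h₁ ^ 2 * e2 - H ^ 2 * e1) / (h₁ * h₂ * H) := by
    rw [he1, he2, hH]
    field_simp
    ring
  rw [key, abs_div, abs_of_pos hden]
  calc |h₁ ^ 2 * e2 - H ^ 2 * e1| / (h₁ * h₂ * H)
      ≤ (h₁ ^ 2 * (M * H ^ 3 / 6) + H ^ 2 * (M * h₁ ^ 3 / 6)) / (h₁ * h₂ * H) := by
        apply div_le_div_of_nonneg_right ?_ hden.le
        calc |h₁ ^ 2 * e2 - H ^ 2 * e1| ≤ |h₁ ^ 2 * e2| + |H ^ 2 * e1| := abs_sub _ _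
          _ = h₁ ^ 2 * |e2| + H ^ 2 * |e1| := by
              rw [abs_mul, abs_mul, abs_of_nonneg (by positivity : (0:ℝ) ≤ h₁ ^ 2),
                abs_of_nonneg (by positivity : (0:ℝ) ≤ H ^ 2)]
          _ ≤ h₁ ^ 2 * (M * H ^ 3 / 6) + H ^ 2 * (M * h₁ ^ 3 / 6) :=
              add_le_add (mul_le_mul_of_nonneg_left E2 (by positivity))
                (mul_le_mul_of_nonneg_left E1 (by positivity))
    _ = M * (h₁ ^ 2 * H + h₁ * H ^ 2) / (6 * h₂) := by
        field_simp
        ring
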